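/- Let A be a compact metric space with dim A ≤ m. Then the set of continuous maps f : A → ℝ^m that are 0-dimensional (every fiber f⁻¹(x) is of covering dimension ≤ 0) is a dense G_δ subset of the space C(A, ℝ^m) of all continuous maps with the uniform convergence topology. -/

import Mathlib

open Set

/-- Covering dimension: `covDim X ≤ n` iff every open cover admits a shrinking
(an open refinement indexed by the same set) of order ≤ n+1. -/
noncomputable def covDim (X : Type*) [TopologicalSpace X] : ℕ∞ :=
  sInf {n : ℕ∞ | ∀ (ι : Type) (U : ι → Set X), (∀ i, IsOpen (U i)) →
    (⋃ i, U i) = univ →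
    ∃ V : ι → Set X, (∀ i, IsOpen (V i)) ∧ (⋃ i, V i) = univ ∧
      (∀ i, V i ⊆ U i) ∧ ∀ x : X, {i | x ∈ V i}.encard ≤ n + 1}

open Metric

lemma covDim_le_iff {X : Type*} [TopologicalSpace X] {n : ℕ∞} (hn : n ≠ ⊤) :
    covDim X ≤ n ↔ ∀ (ι : Type) (U : ι → Set X), (∀ i, IsOpen (U i)) → (⋃ i, U i) = univ →
      ∃ V : ι → Set X, (∀ i, IsOpen (V i)) ∧ (⋃ i, V i) = univ ∧ (∀ i, V i ⊆ U i) ∧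
        ∀ x : X, {i | x ∈ V i}.encard ≤ n + 1 := by
  constructor
  · intro h
    have hex : ∃ a ∈ {n : ℕ∞ | ∀ (ι : Type) (U : ι → Set X), (∀ i, IsOpen (U i)) →
        (⋃ i, U i) = univ →
        ∃ V : ι → Set X, (∀ i, IsOpen (V i)) ∧ (⋃ i, V i) = univ ∧
          (∀ i, V i ⊆ U i) ∧ ∀ x : X, {i | x ∈ V i}.encard ≤ n + 1}, a ≤ n := by
      by_contra hc
      push_neg at hc
      have : n + 1 ≤ covDim X := le_sInf fun a ha => (ENat.add_one_le_iff hn).2 (hc a ha)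
      have := this.trans h
      exact absurd this (by simp [ENat.add_one_le_iff hn] )
    obtain ⟨a, ha, han⟩ := hex
    intro ι U hUo hUc
    obtain ⟨V, h1, h2, h3, h4⟩ := ha ι U hUo hUc
    exact ⟨V, h1, h2, h3, fun x => (h4 x).trans (add_le_add_left han 1)⟩
  · intro h
    exact sInf_le h

variable {A : Type} [MetricSpace A] [CompactSpace A] {m : ℕ}

local notation "E" => EuclideanSpace ℝ (Fin m)

def GoodAt (f : C(A, EuclideanSpace ℝ (Fin m))) (ε : ℝ) (y : EuclideanSpace ℝ (Fin m)) : Prop :=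
  ∃ δ > (0:ℝ), ∃ (k : ℕ) (V : Fin k → Set A), (∀ i, IsOpen (V i)) ∧
    (f ⁻¹' Metric.ball y δ ⊆ ⋃ i, V i) ∧ (∀ i, Metric.diam (V i) ≤ ε) ∧
    ∀ x ∈ f ⁻¹' Metric.ball y δ, ∀ i j, x ∈ V i → x ∈ V j → i = j

def Good (ε : ℝ) (f : C(A, EuclideanSpace ℝ (Fin m))) : Prop := ∀ y, GoodAt f ε y

lemma isOpen_good [Nonempty A] (ε : ℝ) : IsOpen {f : C(A, E) | Good ε f} := by
  rw [Metric.isOpen_iff]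
  intro f hf
  choose δ hδpos k V hVo hcov hdiam hdisj using hf
  have hK : IsCompact (range f) := isCompact_range f.continuous
  have hKcov : range f ⊆ ⋃ y : range f, ball (y : E) (δ y / 8) := by
    intro z hz
    exact mem_iUnion.2 ⟨⟨z, hz⟩, mem_ball_self (div_pos (hδpos z) (by norm_num))⟩
  obtain ⟨t, ht⟩ := hK.elim_finite_subcover (fun y : range f => ball (y : E) (δ y / 8))
    (fun y => isOpen_ball) hKcov
  have htne : t.Nonempty := by
    rcases ‹Nonempty A› with ⟨a⟩
    have : f a ∈ ⋃ i ∈ t, ball (i : E) (δ i / 8) := ht (mem_range_self a)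
    rcases mem_iUnion₂.1 this with ⟨i, hit, _⟩
    exact ⟨i, hit⟩
  set r : ℝ := t.inf' htne (fun y => δ y / 8) with hr
  have hrpos : 0 < r := by
    rw [hr, Finset.lt_inf'_iff]
    exact fun y _ => div_pos (hδpos y) (by norm_num)
  refine ⟨r, hrpos, ?_⟩
  intro g hg
  rw [mem_ball] at hg
  have hgf : ∀ x, dist (g x) (f x) < r :=
    fun x => lt_of_le_of_lt (ContinuousMap.dist_apply_le_dist x) hg
  intro y
  by_cases hcase : ∃ a, g a ∈ ball y r
  · obtain ⟨a₀, ha₀⟩ := hcase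
    have hfa₀ : f a₀ ∈ ⋃ i ∈ t, ball (i : E) (δ i / 8) := ht (mem_range_self a₀)
    rcases mem_iUnion₂.1 hfa₀ with ⟨yl, hyl, hfyl⟩
    have hrle : r ≤ δ yl / 8 := Finset.inf'_le _ hyl
    have hsub : g ⁻¹' ball y r ⊆ f ⁻¹' ball (yl : E) (δ yl) := by
      intro x hx
      simp only [mem_preimage, mem_ball] at hx ⊢
      have h1 : dist (f x) (g x) < r := by rw [dist_comm]; exact hgf x
      have h2 : dist (g a₀) y < r := ha₀
      have h3 : dist (g a₀) (f a₀) < r := hgf a₀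
      have h4 : dist (f a₀) (yl : E) < δ yl / 8 := hfyl
      have T1 := dist_triangle (f x) (g x) (yl : E)
      have T2 := dist_triangle (g x) y (yl : E)
      have T3 := dist_triangle y (g a₀) (yl : E)
      have T4 := dist_triangle (g a₀) (f a₀) (yl : E)
      have h2' : dist y (g a₀) < r := by rw [dist_comm]; exact h2
      nlinarith [hrle, hδpos yl, h1, h3, h4, hx]
    refine ⟨r, hrpos, k yl, V yl, hVo yl, hsub.trans (hcov yl), hdiam yl, ?_⟩
    intro x hx i j hi hj
    exact hdisj yl x (hsub hx) i j hi hj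
  · push_neg at hcase
    refine ⟨r, hrpos, 0, Fin.elim0, fun i => i.elim0, ?_, fun i => i.elim0, ?_⟩
    · intro x hx
      exact absurd hx (hcase x)
    · intro x hx
      exact absurd hx (hcase x)

lemma goodAt_of_pieces (f : C(A, E)) (y : E) {ε : ℝ} (hε : 0 < ε)
    {ι : Type} [Fintype ι] (K : ι → Set A)
    (hKc : ∀ i, IsCompact (K i)) (hKne : ∀ i, (K i).Nonempty)
    (hKd : ∀ i j, i ≠ j → Disjoint (K i) (K j))
    (hcov : f ⁻¹' {y} ⊆ ⋃ i, K i) (hdiam : ∀ i, diam (K i) ≤ ε / 2) :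
    GoodAt f ε y := by
  classical
  set W : ι → Set A := fun i =>
    {x | infDist x (K i) < ε / 4} ∩ ⋂ j, {x | j ≠ i → infDist x (K i) < infDist x (K j)} with hW
  have hWo : ∀ i, IsOpen (W i) := by
    intro i
    refine IsOpen.inter (isOpen_lt (continuous_infDist_pt (K i)) continuous_const) ?_
    refine isOpen_iInter_of_finite fun j => ?_
    by_cases hji : j = i
    · simp [hji]
    · have : {x : A | j ≠ i → infDist x (K i) < infDist x (K j)}
          = {x : A | infDist x (K i) < infDist x (K j)} := by
        ext x; simp [hji]
      rw [this]
      exact isOpen_lt (continuous_infDist_pt (K i)) (continuous_infDist_pt (K j))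
  have hKW : ∀ i, K i ⊆ W i := by
    intro i x hx
    constructor
    · simpa [infDist_zero_of_mem hx] using by positivity
    · refine mem_iInter.2 fun j => fun hji => ?_
      rw [infDist_zero_of_mem hx]
      rw [← (hKc j).isClosed.notMem_iff_infDist_pos (hKne j)]
      exact fun hxj => (hKd j i hji).ne_of_mem hxj hx rfl
  have hWd : ∀ i j, i ≠ j → ∀ x, x ∈ W i → x ∈ W j → False := by
    intro i j hij x hxi hxj
    have h1 : infDist x (K i) < infDist x (K j) := (mem_iInter.1 hxi.2 j) hij.symm
    have h2 : infDist x (K j) < infDist x (K i) := (mem_iInter.1 hxj.2 i) hij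
    linarith
  have hWdiam : ∀ i, diam (W i) ≤ ε := by
    intro i
    refine diam_le_of_forall_dist_le hε.le fun x hx x' hx' => ?_
    obtain ⟨a, ha, hda⟩ := (infDist_lt_iff (hKne i)).1 hx.1
    obtain ⟨a', ha', hda'⟩ := (infDist_lt_iff (hKne i)).1 hx'.1
    have hdd : dist a a' ≤ ε / 2 := le_trans (dist_le_diam_of_mem (hKc i).isBounded ha ha')
      (hdiam i)
    calc dist x x' ≤ dist x a + dist a a' + dist a' x' := dist_triangle4 x a a' x'
      _ ≤ ε / 4 + ε / 2 + ε / 4 := by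
          rw [dist_comm a' x']
          exact add_le_add (add_le_add hda.le hdd) hda'.le
      _ = ε := by ring
  -- reindex by Fin
  classical
  set e := Fintype.equivFin ι with he
  set Wf : Fin (Fintype.card ι) → Set A := fun i => W (e.symm i) with hWf
  have hWfuni : (⋃ i, Wf i) = ⋃ j, W j := by
    ext a
    simp only [mem_iUnion, hWf]
    exact ⟨fun ⟨i, h⟩ => ⟨e.symm i, h⟩, fun ⟨j, h⟩ => ⟨e j, by simpa using h⟩⟩
  have hWfo : ∀ i, IsOpen (Wf i) := fun i => hWo _
  have hWfdiam : ∀ i, diam (Wf i) ≤ ε := fun i => hWdiam _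
  have hWfd : ∀ x i j, x ∈ Wf i → x ∈ Wf j → i = j := by
    intro x i j hi hj
    by_contra hij
    exact hWd (e.symm i) (e.symm j) (fun hh => hij (by simpa using congrArg e hh)) x hi hj
  -- find δ
  set C : Set A := univ \ ⋃ i, W i with hC
  have hCc : IsCompact C := (isClosed_univ.sdiff (isOpen_iUnion hWo)).isCompact
  have hfib : f ⁻¹' {y} ⊆ ⋃ i, W i := hcov.trans (iUnion_mono hKW)
  by_cases hCe : C.Nonempty
  · have hyC : y ∉ f '' C := by
      rintro ⟨x, hxC, hfx⟩
      exact hxC.2 (hfib (by simp [hfx]))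
    have hfCc : IsCompact (f '' C) := hCc.image f.continuous
    set δ := infDist y (f '' C) with hδ
    have hδpos : 0 < δ := (hfCc.isClosed.notMem_iff_infDist_pos (hCe.image f)).1 hyC
    refine ⟨δ, hδpos, _, Wf, hWfo, ?_, hWfdiam, fun x _ i j hi hj => hWfd x i j hi hj⟩
    rw [hWfuni]
    intro x hx
    by_contra hxW
    have hxC : x ∈ C := ⟨trivial, hxW⟩
    have h1 : δ ≤ dist y (f x) := infDist_le_dist_of_mem (mem_image_of_mem f hxC)
    have h2 : dist (f x) y < δ := hx
    rw [dist_comm] at h2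
    linarith
  · refine ⟨1, one_pos, _, Wf, hWfo, ?_, hWfdiam, fun x _ i j hi hj => hWfd x i j hi hj⟩
    rw [hWfuni]
    intro x _
    by_contra hxW
    exact hCe ⟨x, trivial, hxW⟩

lemma goodAt_of_covDim_fiber (f : C(A, E)) (y : E)
    (h0 : covDim (f ⁻¹' {y} : Set A) ≤ 0) {ε : ℝ} (hε : 0 < ε) : GoodAt f ε y := by
  classical
  set F : Set A := f ⁻¹' {y} with hF
  set X := ↥F
  have hXcomp : IsCompact F := (isClosed_singleton.preimage f.continuous).isCompact
  haveI : CompactSpace X := isCompact_iff_compactSpace.1 hXcomp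
  -- apply covDim
  have h := (covDim_le_iff (by simp)).1 h0 X
    (fun b => Subtype.val ⁻¹' ball (b : A) (ε / 8))
    (fun b => isOpen_ball.preimage continuous_subtype_val)
    (by
      ext x
      simp only [mem_iUnion, mem_univ, iff_true]
      exact ⟨x, by simp [mem_ball, dist_self, div_pos hε]⟩)
  obtain ⟨V, hVo, hVuni, hVsub, hVcard⟩ := h
  have huniq : ∀ (x : X) (b b' : X), x ∈ V b → x ∈ V b' → b = b' := by
    intro x b b' hb hb'
    have := hVcard x
    rw [zero_add] at this
    exact Set.encard_le_one_iff.1 this b b' hb hb'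
  -- each V b is closed
  have hVcl : ∀ b, IsClosed (V b) := by
    intro b
    rw [← isOpen_compl_iff]
    have : (V b)ᶜ = ⋃ b' ∈ {b' | b' ≠ b}, V b' := by
      ext x
      simp only [mem_compl_iff, mem_iUnion, mem_setOf_eq]
      constructor
      · intro hx
        have : x ∈ ⋃ b', V b' := hVuni ▸ mem_univ x
        obtain ⟨b', hb'⟩ := mem_iUnion.1 this
        exact ⟨b', fun hbb => hx (hbb ▸ hb'), hb'⟩
      · rintro ⟨b', hbb, hb'⟩ hxb
        exact hbb (huniq x b' b hb' hxb)
    rw [this]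
    exact isOpen_biUnion fun b' _ => hVo b'
  -- finite subcover
  obtain ⟨t, ht⟩ := isCompact_univ.elim_finite_subcover V hVo (by rw [hVuni])
  set t' : Finset X := t.filter (fun b => (V b).Nonempty) with ht'
  set K : ↥t' → Set A := fun b => Subtype.val '' V (b : X) with hK
  refine goodAt_of_pieces f y hε K ?_ ?_ ?_ ?_ ?_
  · intro b
    exact ((hVcl _).isCompact).image continuous_subtype_val
  · intro b
    obtain ⟨x, hx⟩ := (Finset.mem_filter.1 b.2).2
    exact ⟨x, x, hx, rfl⟩
  · intro i j hij
    have hVd : Disjoint (V (i : X)) (V (j : X)) := by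
      rw [Set.disjoint_left]
      intro x hxi hxj
      exact hij (Subtype.coe_injective (huniq x _ _ hxi hxj))
    exact (Set.disjoint_image_of_injective Subtype.coe_injective hVd)
  · intro x hx
    have : (⟨x, hx⟩ : X) ∈ ⋃ b ∈ t, V b := ht (mem_univ _)
    obtain ⟨b, hbt, hb⟩ := mem_iUnion₂.1 this
    have hbt' : b ∈ t' := Finset.mem_filter.2 ⟨hbt, ⟨_, hb⟩⟩
    exact mem_iUnion.2 ⟨⟨b, hbt'⟩, mem_image_of_mem _ hb⟩
  · intro b
    have hsub : K b ⊆ ball ((b : X) : A) (ε / 8) := by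
      rintro _ ⟨v, hv, rfl⟩
      exact hVsub (b : X) hv
    refine (diam_mono hsub isBounded_ball).trans ?_
    calc diam (ball ((b : X) : A) (ε / 8)) ≤ 2 * (ε / 8) := diam_ball (by positivity)
      _ ≤ ε / 2 := by linarith
lemma covDim_fiber_of_good (f : C(A, E))
    (hf : ∀ n : ℕ, Good (1 / ((n : ℝ) + 1)) f) (y : E) :
    covDim (f ⁻¹' {y} : Set A) ≤ 0 := by
  classical
  set F : Set A := f ⁻¹' {y} with hF
  rw [covDim_le_iff (by simp)]
  intro ι U hUo hUuni
  by_cases hne : Nonempty ↥F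
  swap
  · refine ⟨U, hUo, hUuni, fun i => subset_rfl, fun x => absurd ⟨x⟩ hne⟩
  obtain ⟨x₀⟩ := hne
  have hx₀ : x₀ ∈ ⋃ i, U i := hUuni ▸ mem_univ x₀
  obtain ⟨i₀, _⟩ := mem_iUnion.1 hx₀
  -- realize the U i as preimages of opens in A
  have hO : ∀ i, ∃ O : Set A, IsOpen O ∧ Subtype.val ⁻¹' O = U i := by
    intro i
    obtain ⟨O, hO1, hO2⟩ := isOpen_induced_iff.1 (hUo i)
    exact ⟨O, hO1, hO2⟩
  choose O hOo hOeq using hO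
  -- pick radii
  have hr : ∀ b : ↥F, ∃ r : ℝ, 0 < r ∧ ∃ i, ball (b : A) (2 * r) ⊆ O i := by
    intro b
    have hb : b ∈ ⋃ i, U i := hUuni ▸ mem_univ b
    obtain ⟨i, hbi⟩ := mem_iUnion.1 hb
    have : (b : A) ∈ O i := by rw [← hOeq i] at hbi; exact hbi
    obtain ⟨ρ, hρpos, hρ⟩ := Metric.isOpen_iff.1 (hOo i) _ this
    exact ⟨ρ / 2, by linarith, i, by rw [mul_div_cancel₀]; exact hρ; norm_num⟩
  choose r hrpos ha using hr
  choose iof hiof using ha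
  -- finite subcover of F by the balls of radius r b
  haveI : CompactSpace ↥F :=
    isCompact_iff_compactSpace.1 ((isClosed_singleton.preimage f.continuous).isCompact)
  obtain ⟨t, ht⟩ := isCompact_univ.elim_finite_subcover
    (fun b : ↥F => Subtype.val ⁻¹' ball (b : A) (r b))
    (fun b => isOpen_ball.preimage continuous_subtype_val)
    (by
      intro x _
      exact mem_iUnion.2 ⟨x, by simp [mem_ball, dist_self, hrpos x]⟩)
  have htne : t.Nonempty := by
    have : x₀ ∈ ⋃ b ∈ t, Subtype.val ⁻¹' ball (b : A) (r b) := ht (mem_univ x₀)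
    obtain ⟨b, hbt, _⟩ := mem_iUnion₂.1 this
    exact ⟨b, hbt⟩
  set ℓ : ℝ := t.inf' htne (fun b => r b) with hℓ
  have hℓpos : 0 < ℓ := by
    rw [hℓ, Finset.lt_inf'_iff]
    exact fun b _ => hrpos b
  obtain ⟨n, hn⟩ := exists_nat_one_div_lt hℓpos
  obtain ⟨δ, hδpos, kk, W, hWo, hWcov, hWdiam, hWdisj⟩ := hf n y
  have hFsub : F ⊆ f ⁻¹' ball y δ := by
    intro x hx
    simp only [mem_preimage] at hx ⊢
    rw [hx]
    exact mem_ball_self hδpos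
  -- assign to each relevant j an index of ι
  have hass : ∀ j : Fin kk, ∃ i : ι, (W j ∩ F).Nonempty → W j ⊆ O i := by
    intro j
    by_cases hj : (W j ∩ F).Nonempty
    · obtain ⟨c, hcW, hcF⟩ := hj
      have : (⟨c, hcF⟩ : ↥F) ∈ ⋃ b ∈ t, Subtype.val ⁻¹' ball (b : A) (r b) := ht (mem_univ _)
      obtain ⟨b, hbt, hcb⟩ := mem_iUnion₂.1 this
      refine ⟨iof b, fun _ => ?_⟩
      intro w hw
      refine hiof b ?_
      have h1 : dist w c ≤ diam (W j) :=
        dist_le_diam_of_mem ((isCompact_univ.isBounded).subset (subset_univ _)) hw hcW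
      have h2 : diam (W j) ≤ 1 / ((n : ℝ) + 1) := hWdiam j
      have h3 : dist c (b : A) < r b := hcb
      have h4 : ℓ ≤ r b := Finset.inf'_le _ hbt
      have := dist_triangle w c (b : A)
      simp only [mem_ball]
      linarith
    · exact ⟨i₀, fun h => absurd h hj⟩
  choose σ hσ using hass
  -- build the disjoint shrinking
  set V : ι → Set ↥F := fun i =>
    Subtype.val ⁻¹' (⋃ (j : Fin kk) (_ : σ j = i ∧ (W j ∩ F).Nonempty), W j) with hV
  refine ⟨V, ?_, ?_, ?_, ?_⟩
  · intro i
    exact (isOpen_iUnion fun j => isOpen_iUnion fun _ => hWo j).preimage continuous_subtype_val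
  · ext x
    simp only [mem_iUnion, mem_univ, iff_true]
    have : (x : A) ∈ ⋃ j, W j := hWcov (hFsub x.2)
    obtain ⟨j, hj⟩ := mem_iUnion.1 this
    refine ⟨σ j, ?_⟩
    simp only [hV, mem_preimage, mem_iUnion]
    exact ⟨j, ⟨rfl, ⟨x, hj, x.2⟩⟩, hj⟩
  · intro i x hx
    simp only [hV, mem_preimage, mem_iUnion] at hx
    obtain ⟨j, ⟨hji, hjne⟩, hxj⟩ := hx
    have : (x : A) ∈ O i := hji ▸ (hσ j hjne hxj)
    rw [← hOeq i]
    exact this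
  · intro x
    rw [zero_add]
    refine Set.encard_le_one_iff.2 fun i i' hi hi' => ?_
    simp only [hV, mem_setOf_eq, mem_preimage, mem_iUnion] at hi hi'
    obtain ⟨j, ⟨hji, _⟩, hxj⟩ := hi
    obtain ⟨j', ⟨hji', _⟩, hxj'⟩ := hi'
    have hj : j = j' := hWdisj (x : A) (hFsub x.2) j j' hxj hxj'
    rw [← hji, ← hji', hj]

lemma exists_avoid (q : E) {r : ℝ} (hr : 0 < r) {L : Type} [Finite L]
    (S : L → AffineSubspace ℝ (EuclideanSpace ℝ (Fin m))) (hS : ∀ l, S l ≠ ⊤) :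
    ∃ z ∈ ball q r, ∀ l, z ∉ S l := by
  have hdense : ∀ l, Dense ((S l : Set E)ᶜ) := by
    intro l
    rw [← interior_eq_empty_iff_dense_compl]
    by_contra h
    obtain ⟨x, hx⟩ := nonempty_iff_ne_empty.2 h
    obtain ⟨ρ, hρ, hball⟩ := Metric.isOpen_iff.1 isOpen_interior x hx
    have h1 : affineSpan ℝ (ball x ρ) = ⊤ := isOpen_ball.affineSpan_eq_top ⟨x, mem_ball_self hρ⟩
    have h2 : affineSpan ℝ (ball x ρ) ≤ S l := by
      rw [affineSpan_le]
      exact (hball.trans interior_subset)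
    exact hS l (top_le_iff.1 (h1 ▸ h2))
  have hopen : ∀ l, IsOpen ((S l : Set E)ᶜ) :=
    fun l => (AffineSubspace.closed_of_finiteDimensional (S l)).isOpen_compl
  haveI : Countable L := Finite.to_countable
  have hd : Dense (⋂ l, ((S l : Set E)ᶜ)) := dense_iInter_of_isOpen hopen hdense
  obtain ⟨z, hz1, hz2⟩ := hd.exists_mem_open isOpen_ball ⟨q, mem_ball_self hr⟩
  exact ⟨z, hz2, fun l => (mem_iInter.1 hz1 l)⟩


lemma span_image_ne_top {N : ℕ} (p : Fin N → E) (T : Finset (Fin N)) (hT : T.card ≤ m) :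
    affineSpan ℝ (p '' (T : Set (Fin N))) ≠ ⊤ := by
  rcases T.eq_empty_or_nonempty with hT0 | hTne
  · subst hT0
    rw [Finset.coe_empty, Set.image_empty, AffineSubspace.span_empty]
    exact bot_ne_top
  · intro h
    obtain ⟨n, hn⟩ : ∃ n, T.card = n + 1 :=
      ⟨T.card - 1, (Nat.succ_pred_eq_of_pos (Finset.card_pos.2 hTne)).symm⟩
    classical
    have h1 : Module.finrank ℝ (vectorSpan ℝ ((T.image p : Finset _) : Set (EuclideanSpace ℝ (Fin m)))) ≤ n :=
      finrank_vectorSpan_image_finset_le ℝ p T hn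
    rw [Finset.coe_image] at h1
    have h2 : (affineSpan ℝ (p '' (T : Set (Fin N)))).direction = ⊤ := by
      rw [h, AffineSubspace.direction_top]
    rw [direction_affineSpan] at h2
    rw [h2] at h1
    have h3 : Module.finrank ℝ (⊤ : Submodule ℝ (EuclideanSpace ℝ (Fin m)))
        = m := by rw [finrank_top]; exact finrank_euclideanSpace_fin
    omega

lemma exists_general_position (N : ℕ) (q : Fin N → E) {r : ℝ} (hr : 0 < r) :
    ∃ p : Fin N → E, (∀ j, dist (p j) (q j) < r) ∧
      ∀ S : Finset (Fin N), S.card ≤ m + 1 →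
        AffineIndependent ℝ (fun i : S => p (i : Fin N)) := by
  classical
  induction N with
  | zero =>
      refine ⟨q, fun j => j.elim0, fun S _ => ?_⟩
      have : IsEmpty ↥S := by
        constructor; rintro ⟨i, _⟩; exact i.elim0
      exact affineIndependent_of_subsingleton ℝ _
  | succ N ih =>
      obtain ⟨p', hp'd, hp'gp⟩ := ih (q ∘ Fin.castSucc)
      -- avoid the spans of small subfamilies of p'
      set L := {T : Finset (Fin N) // T.card ≤ m}
      obtain ⟨z, hzball, hzavoid⟩ := exists_avoid (q (Fin.last N)) hr
        (fun T : L => affineSpan ℝ (p' '' ((T : Finset (Fin N)) : Set (Fin N))))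
        (fun T => span_image_ne_top p' T T.2)
      set p : Fin (N + 1) → E := Fin.snoc p' z with hp
      have hplast : p (Fin.last N) = z := by simp [hp]
      have hpcs : ∀ j : Fin N, p (Fin.castSucc j) = p' j := by
        intro j; simp [hp]
      refine ⟨p, ?_, ?_⟩
      · intro j
        refine Fin.lastCases ?_ ?_ j
        · rw [hplast]; exact mem_ball.1 hzball
        · intro j'; rw [hpcs]; exact hp'd j'
      · intro S hS
        by_cases hlast : Fin.last N ∈ S
        · -- use the insert lemma
          set T : Finset (Fin N) := Finset.univ.filter (fun j => Fin.castSucc j ∈ S) with hT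
          have hTS : T.image Fin.castSucc = S.erase (Fin.last N) := by
            ext i
            simp only [hT, Finset.mem_image, Finset.mem_filter, Finset.mem_univ, true_and,
              Finset.mem_erase]
            constructor
            · rintro ⟨j, hj, rfl⟩
              exact ⟨Fin.castSucc_lt_last j |>.ne, hj⟩
            · rintro ⟨hne, hi⟩
              exact ⟨i.castPred hne, by rwa [Fin.castSucc_castPred], Fin.castSucc_castPred i hne⟩
          have hTcard : T.card ≤ m := by
            have h1 : (T.image Fin.castSucc).card = T.card :=
              Finset.card_image_of_injective _ (Fin.castSucc_injective N)
            have h2 : (S.erase (Fin.last N)).card = S.card - 1 :=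
              Finset.card_erase_of_mem hlast
            have h3 : 1 ≤ S.card := Finset.card_pos.2 ⟨_, hlast⟩
            have h4 : (T.image Fin.castSucc).card = (S.erase (Fin.last N)).card := by rw [hTS]
            omega
          set i : ↥S := ⟨Fin.last N, hlast⟩ with hi
          refine AffineIndependent.affineIndependent_of_notMem_span (i := i) ?_ ?_
          · -- subfamily indexed by {y : ↥S // y ≠ i}
            have hemb : ∀ x : {y : ↥S // y ≠ i}, ((x : ↥S) : Fin (N + 1)) ≠ Fin.last N := by
              rintro ⟨⟨v, hv⟩, hne⟩ h
              exact hne (Subtype.ext (by simpa using h))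
            set e : {y : ↥S // y ≠ i} ↪ ↥T :=
              ⟨fun x => ⟨((x : ↥S) : Fin (N + 1)).castPred (hemb x), by
                simp only [hT, Finset.mem_filter, Finset.mem_univ, true_and,
                  Fin.castSucc_castPred]
                exact (x : ↥S).2⟩, by
                rintro x x' hxx
                have : ((x : ↥S) : Fin (N + 1)) = ((x' : ↥S) : Fin (N + 1)) := by
                  have := congrArg (fun w : ↥T => Fin.castSucc (w : Fin N)) hxx
                  simpa [Fin.castSucc_castPred] using this
                exact Subtype.ext (Subtype.ext this)⟩ with he
            have hcomp : (fun x : {y : ↥S // y ≠ i} => p ((x : ↥S) : Fin (N + 1)))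
                = (fun j : ↥T => p' (j : Fin N)) ∘ e := by
              funext x
              simp only [Function.comp_apply, he, Function.Embedding.coeFn_mk]
              calc p ((x : ↥S) : Fin (N + 1))
                  = p (Fin.castSucc (((x : ↥S) : Fin (N + 1)).castPred (hemb x))) := by
                    rw [Fin.castSucc_castPred]
                _ = p' (((x : ↥S) : Fin (N + 1)).castPred (hemb x)) := hpcs _
            rw [hcomp]
            exact (hp'gp T (le_trans hTcard (Nat.le_succ m))).comp_embedding e
          · -- z not in the span
            have himg : (fun y : ↥S => p (y : Fin (N + 1))) '' {x | x ≠ i}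
                = p' '' ((T : Finset (Fin N)) : Set (Fin N)) := by
              ext w
              simp only [Set.mem_image, mem_setOf_eq, Finset.coe_filter]
              constructor
              · rintro ⟨⟨v, hvS⟩, hvne, rfl⟩
                have hvlast : v ≠ Fin.last N := by
                  intro h; exact hvne (Subtype.ext h)
                refine ⟨v.castPred hvlast, ?_, ?_⟩
                · simp only [hT, Finset.mem_coe, Finset.mem_filter, Finset.mem_univ, true_and]
                  rwa [Fin.castSucc_castPred]
                · rw [← hpcs (v.castPred hvlast), Fin.castSucc_castPred]
              · rintro ⟨j, hj, rfl⟩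
                simp only [hT, Finset.mem_coe, Finset.mem_filter, Finset.mem_univ, true_and] at hj
                refine ⟨⟨Fin.castSucc j, hj⟩, ?_, hpcs j⟩
                intro h
                have := congrArg (fun w : ↥S => (w : Fin (N + 1))) h
                simp only [hi] at this
                exact (Fin.castSucc_lt_last j).ne this
            rw [himg]
            have : p (i : Fin (N + 1)) = z := hplast
            rw [show ((i : ↥S) : Fin (N+1)) = Fin.last N from rfl, hplast]
            exact hzavoid ⟨T, hTcard⟩
        · -- all indices below last
          have hemb : ∀ x : ↥S, ((x : Fin (N + 1))) ≠ Fin.last N := by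
            rintro ⟨v, hv⟩ h
            simp only at h
            subst h; exact hlast hv
          set T : Finset (Fin N) := Finset.univ.filter (fun j => Fin.castSucc j ∈ S) with hT
          have hTcard : T.card ≤ m + 1 := by
            have h1 : (T.image Fin.castSucc).card = T.card :=
              Finset.card_image_of_injective _ (Fin.castSucc_injective N)
            have h2 : T.image Fin.castSucc ⊆ S := by
              intro w hw
              simp only [hT, Finset.mem_image, Finset.mem_filter, Finset.mem_univ, true_and] at hw
              obtain ⟨j, hj, rfl⟩ := hw
              exact hj
            have := Finset.card_le_card h2
            omega
          set e : ↥S ↪ ↥T :=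
            ⟨fun x => ⟨(x : Fin (N + 1)).castPred (hemb x), by
              simp only [hT, Finset.mem_filter, Finset.mem_univ, true_and, Fin.castSucc_castPred]
              exact x.2⟩, by
              rintro x x' hxx
              have : (x : Fin (N + 1)) = (x' : Fin (N + 1)) := by
                have := congrArg (fun w : ↥T => Fin.castSucc (w : Fin N)) hxx
                simpa [Fin.castSucc_castPred] using this
              exact Subtype.ext this⟩ with he
          have hcomp : (fun x : ↥S => p (x : Fin (N + 1)))
              = (fun j : ↥T => p' (j : Fin N)) ∘ e := by
            funext x
            simp only [Function.comp_apply, he, Function.Embedding.coeFn_mk]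
            calc p (x : Fin (N + 1))
                = p (Fin.castSucc ((x : Fin (N + 1)).castPred (hemb x))) := by
                  rw [Fin.castSucc_castPred]
              _ = p' ((x : Fin (N + 1)).castPred (hemb x)) := hpcs _
          rw [hcomp]
          exact (hp'gp T hTcard).comp_embedding e
lemma dense_good [Nonempty A] (hA : covDim A ≤ (m : ℕ∞)) {ε : ℝ} (hε : 0 < ε) :
    Dense {f : C(A, E) | Good ε f} := by
  classical
  rw [Metric.dense_iff]
  intro f η hη
  -- uniform continuity
  obtain ⟨ρ₀, hρ₀pos, hρ₀⟩ := Metric.uniformContinuous_iff.1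
    (CompactSpace.uniformContinuous_of_continuous f.continuous) (η / 4) (by positivity)
  set ρ : ℝ := min ρ₀ (ε / 4) with hρ
  have hρpos : 0 < ρ := lt_min hρ₀pos (by positivity)
  -- finite cover of A by ρ-balls
  obtain ⟨s, hscov⟩ := isCompact_univ.elim_finite_subcover (fun a : A => ball a ρ)
    (fun a => isOpen_ball) (fun a _ => mem_iUnion.2 ⟨a, mem_ball_self hρpos⟩)
  set N : ℕ := s.card with hN
  set xe := s.equivFin with hxe
  set x : Fin N → A := fun j => (xe.symm j : A) with hx
  have hxcov : (⋃ j, ball (x j) ρ) = univ := by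
    apply eq_univ_of_forall
    intro a
    have := hscov (mem_univ a)
    obtain ⟨b, hbs, hb⟩ := mem_iUnion₂.1 this
    exact mem_iUnion.2 ⟨xe ⟨b, hbs⟩, by simpa [hx, hxe] using hb⟩
  -- shrink via covDim
  obtain ⟨V, hVo, hVuni, hVsub, hVcard⟩ := (covDim_le_iff (ENat.coe_ne_top m)).1 hA
    (Fin N) (fun j => ball (x j) ρ) (fun j => isOpen_ball) hxcov
  -- partition of unity
  obtain ⟨φ, hφsub⟩ := PartitionOfUnity.exists_isSubordinate isClosed_univ V hVo
    (by rw [hVuni])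
  have hφsum : ∀ a : A, ∑ j, φ j a = 1 := by
    intro a
    rw [← finsum_eq_sum_of_fintype]
    exact φ.sum_eq_one (mem_univ a)
  have hφV : ∀ j (a : A), 0 < φ j a → a ∈ V j := by
    intro j a ha
    exact hφsub j (subset_closure (by simp [Function.mem_support, ha.ne']))
  -- general position points near f (x j)
  obtain ⟨p, hpd, hpgp⟩ := exists_general_position (m := m) N (fun j => f (x j))
    (r := η / 4) (by positivity)
  -- the approximating map
  set g : C(A, E) := ⟨fun a => ∑ j, φ j a • p j, by
    refine continuous_finset_sum _ fun j _ => ((φ j).continuous.smul continuous_const)⟩ with hg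
  have hga : ∀ a : A, g a = ∑ j, φ j a • p j := fun a => rfl
  -- distance estimate
  have hdistpt : ∀ a : A, dist (g a) (f a) ≤ η / 2 := by
    intro a
    have hterm : ∀ j, ‖φ j a • (p j - f a)‖ ≤ φ j a * (η / 2) := by
      intro j
      rcases eq_or_lt_of_le (φ.nonneg j a) with h0 | hpos
      · simp [← h0]
      · have haV : a ∈ V j := hφV j a hpos
        have haball : a ∈ ball (x j) ρ := hVsub j haV
        have h1 : dist (f a) (f (x j)) < η / 4 :=
          hρ₀ (lt_of_lt_of_le haball (min_le_left _ _))
        have h2 : dist (p j) (f (x j)) < η / 4 := hpd j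
        have h3 : ‖p j - f a‖ ≤ η / 2 := by
          have := dist_triangle (p j) (f (x j)) (f a)
          rw [dist_comm (f (x j)) (f a)] at this
          rw [← dist_eq_norm]
          linarith
        rw [norm_smul, Real.norm_eq_abs, abs_of_nonneg (φ.nonneg j a)]
        exact mul_le_mul_of_nonneg_left h3 (φ.nonneg j a)
    have hsum : g a - f a = ∑ j, φ j a • (p j - f a) := by
      simp only [smul_sub, Finset.sum_sub_distrib, ← Finset.sum_smul, hφsum a, one_smul, hga]
    rw [dist_eq_norm, hsum]
    calc ‖∑ j, φ j a • (p j - f a)‖ ≤ ∑ j, ‖φ j a • (p j - f a)‖ := norm_sum_le _ _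
      _ ≤ ∑ j, φ j a * (η / 2) := Finset.sum_le_sum fun j _ => hterm j
      _ = (∑ j, φ j a) * (η / 2) := by rw [Finset.sum_mul]
      _ = η / 2 := by rw [hφsum a, one_mul]
  have hgball : g ∈ ball f η := by
    rw [mem_ball]
    calc dist g f ≤ η / 2 := (ContinuousMap.dist_le (by positivity)).2 hdistpt
      _ < η := by linarith
  refine ⟨g, hgball, ?_⟩
  intro y
  set Sa : A → Finset (Fin N) := fun a => Finset.univ.filter (fun j => 0 < φ j a) with hSa
  have hmemSa : ∀ (a : A) (j : Fin N), j ∈ Sa a ↔ 0 < φ j a := by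
    intro a j; simp [hSa]
  have hSacard : ∀ a : A, (Sa a).card ≤ m + 1 := by
    intro a
    have h1 : ((Sa a : Set (Fin N))) ⊆ {i | a ∈ V i} := by
      intro j hj
      exact hφV j a ((hmemSa a j).1 hj)
    have h2 := (Set.encard_le_encard h1).trans (hVcard a)
    rw [Set.encard_coe_eq_coe_finsetCard] at h2
    exact_mod_cast h2
  have hSasum : ∀ a : A, ∑ j ∈ Sa a, φ j a = 1 := by
    intro a
    rw [hSa, Finset.sum_filter_of_ne, hφsum a]
    intro j _ hj
    exact lt_of_le_of_ne (φ.nonneg j a) (Ne.symm hj)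
  have hSacomb : ∀ a : A, ∑ j ∈ Sa a, φ j a • p j = g a := by
    intro a
    rw [hga, hSa, Finset.sum_filter_of_ne]
    intro j _ hj
    have : φ j a ≠ 0 := fun h => hj (by simp [h])
    exact lt_of_le_of_ne (φ.nonneg j a) (Ne.symm this)
  have hkey : ∀ a c : A, g a = y → g c = y → Sa c ⊆ Sa a → Sa a = Sa c := by
    intro a c hgay hgcy hsub
    have hAI : AffineIndependent ℝ (fun i : ↥(Sa a) => p (i : Fin N)) := hpgp (Sa a) (hSacard a)
    set s₁ : Finset ↥(Sa a) := Finset.univ.filter (fun j => (j : Fin N) ∈ Sa c) with hs₁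
    set s₂ : Finset ↥(Sa a) := Finset.univ with hs₂
    set w₁ : ↥(Sa a) → ℝ := fun j => φ (j : Fin N) c with hw₁
    set w₂ : ↥(Sa a) → ℝ := fun j => φ (j : Fin N) a with hw₂
    have hw₁sum : ∑ j ∈ s₁, w₁ j = 1 := by
      rw [hs₁, Finset.sum_filter]
      rw [show ∑ j : ↥(Sa a), (if (j : Fin N) ∈ Sa c then w₁ j else 0)
          = ∑ j ∈ Sa a, (if j ∈ Sa c then φ j c else 0) from
        Finset.sum_coe_sort (Sa a) (fun j => if j ∈ Sa c then φ j c else 0)]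
      rw [Finset.sum_ite_mem, Finset.inter_eq_right.2 hsub]
      exact hSasum c
    have hw₂sum : ∑ j ∈ s₂, w₂ j = 1 := by
      rw [hs₂, show ∑ j : ↥(Sa a), w₂ j = ∑ j ∈ Sa a, φ j a from
        Finset.sum_coe_sort (Sa a) (fun j => φ j a)]
      exact hSasum a
    have hc₁ : s₁.affineCombination ℝ (fun i : ↥(Sa a) => p (i : Fin N)) w₁ = y := by
      rw [Finset.affineCombination_eq_linear_combination _ _ _ hw₁sum]
      rw [hs₁, Finset.sum_filter]
      rw [show ∑ j : ↥(Sa a), (if (j : Fin N) ∈ Sa c then w₁ j • p (j : Fin N) else 0)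
          = ∑ j ∈ Sa a, (if j ∈ Sa c then φ j c • p j else 0) from
        Finset.sum_coe_sort (Sa a) (fun j => if j ∈ Sa c then φ j c • p j else 0)]
      rw [Finset.sum_ite_mem, Finset.inter_eq_right.2 hsub]
      rw [hSacomb c, hgcy]
    have hc₂ : s₂.affineCombination ℝ (fun i : ↥(Sa a) => p (i : Fin N)) w₂ = y := by
      rw [Finset.affineCombination_eq_linear_combination _ _ _ hw₂sum]
      rw [hs₂, show ∑ j : ↥(Sa a), w₂ j • p (j : Fin N) = ∑ j ∈ Sa a, φ j a • p j from
        Finset.sum_coe_sort (Sa a) (fun j => φ j a • p j)]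
      rw [hSacomb a, hgay]
    have hind := hAI.indicator_eq_of_affineCombination_eq s₁ s₂ w₁ w₂ hw₁sum hw₂sum
      (hc₁.trans hc₂.symm)
    refine Finset.Subset.antisymm ?_ hsub
    intro j hj
    have hval := congrFun hind ⟨j, hj⟩
    have hrhs : Set.indicator (↑s₂) w₂ ⟨j, hj⟩ = φ j a := by
      rw [Set.indicator_of_mem (by simp [hs₂]) w₂]
    by_contra hjc
    have hlhs : Set.indicator (↑s₁) w₁ ⟨j, hj⟩ = 0 := by
      rw [Set.indicator_of_notMem _ w₁]
      simp [hs₁, hjc]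
    rw [hlhs, hrhs] at hval
    exact absurd hval.symm (ne_of_gt ((hmemSa a j).1 hj))
  -- pieces
  set Kcl : Finset (Fin N) → Set A := fun S => {a | g a = y ∧ Sa a = S} with hKcl
  set adm : Finset (Finset (Fin N)) := Finset.univ.filter (fun S => (Kcl S).Nonempty) with hadm
  set Wop : Finset (Fin N) → Set A := fun S => {a | ∀ j ∈ S, 0 < φ j a} with hWop
  have hWopen : ∀ S, IsOpen (Wop S) := by
    intro S
    have : Wop S = ⋂ j ∈ S, {a : A | 0 < φ j a} := by
      ext a; simp [hWop]
    rw [this]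
    exact isOpen_biInter_finset fun j _ => isOpen_lt continuous_const (φ j).continuous
  have hmemWop : ∀ S (a : A), a ∈ Wop S ↔ S ⊆ Sa a := by
    intro S a
    constructor
    · intro h j hj
      exact (hmemSa a j).2 (h j hj)
    · intro h j hj
      exact (hmemSa a j).1 (h hj)
  have hKclosed : ∀ S ∈ adm, IsClosed (Kcl S) := by
    intro S hSadm
    obtain ⟨c, hgc, hSac⟩ : ∃ c, g c = y ∧ Sa c = S := (Finset.mem_filter.1 hSadm).2
    have heq : Kcl S = (g ⁻¹' {y}) ∩ ⋂ S' ∈ adm.erase S, (Wop S')ᶜ := by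
      ext a
      simp only [hKcl, mem_setOf_eq, mem_inter_iff, mem_preimage, mem_singleton_iff, mem_iInter,
        mem_compl_iff]
      constructor
      · rintro ⟨hay, haS⟩
        refine ⟨hay, fun S' hS' hW => ?_⟩
        obtain ⟨c', hgc', hSac'⟩ : ∃ c', g c' = y ∧ Sa c' = S' :=
          (Finset.mem_filter.1 (Finset.mem_of_mem_erase hS')).2
        have : Sa a = Sa c' := hkey a c' hay hgc' (by rw [hSac']; exact (hmemWop S' a).1 hW)
        exact (Finset.ne_of_mem_erase hS') (by rw [← hSac', ← this, haS])
      · rintro ⟨hay, hav⟩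
        refine ⟨hay, ?_⟩
        by_contra hne
        have hSaadm : Sa a ∈ adm := Finset.mem_filter.2 ⟨Finset.mem_univ _, ⟨a, hay, rfl⟩⟩
        have : Sa a ∈ adm.erase S := Finset.mem_erase.2 ⟨hne, hSaadm⟩
        exact hav (Sa a) this ((hmemWop (Sa a) a).2 subset_rfl)
    rw [heq]
    refine IsClosed.inter (isClosed_singleton.preimage g.continuous) ?_
    exact isClosed_biInter fun S' _ => (hWopen S').isClosed_compl
  refine goodAt_of_pieces g y hε (ι := ↥adm) (fun S => Kcl (S : Finset (Fin N))) ?_ ?_ ?_ ?_ ?_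
  · intro S
    exact (hKclosed _ S.2).isCompact
  · intro S
    exact (Finset.mem_filter.1 S.2).2
  · intro S S' hne
    rw [Set.disjoint_left]
    rintro a ⟨_, ha⟩ ⟨_, ha'⟩
    exact hne (Subtype.ext (by rw [← ha, ← ha']))
  · intro a ha
    have hay : g a = y := ha
    have hSaadm : Sa a ∈ adm := Finset.mem_filter.2 ⟨Finset.mem_univ _, ⟨a, hay, rfl⟩⟩
    exact mem_iUnion.2 ⟨⟨Sa a, hSaadm⟩, hay, rfl⟩
  · intro S
    obtain ⟨c, hgc, hSac⟩ : ∃ c, g c = y ∧ Sa c = (S : Finset (Fin N)) :=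
      (Finset.mem_filter.1 S.2).2
    have hSne : (S : Finset (Fin N)).Nonempty := by
      rw [← hSac]
      rcases Finset.eq_empty_or_nonempty (Sa c) with h | h
      · exfalso
        have := hSasum c
        rw [h, Finset.sum_empty] at this
        norm_num at this
      · exact h
    obtain ⟨j₀, hj₀⟩ := hSne
    have hsub : Kcl (S : Finset (Fin N)) ⊆ ball (x j₀) ρ := by
      rintro a ⟨hay, haS⟩
      refine hVsub j₀ (hφV j₀ a ?_)
      exact (hmemSa a j₀).1 (by rw [haS]; exact hj₀)
    refine (diam_mono hsub isBounded_ball).trans ?_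
    calc diam (ball (x j₀) ρ) ≤ 2 * ρ := diam_ball hρpos.le
      _ ≤ ε / 2 := by
          have : ρ ≤ ε / 4 := min_le_right _ _
          linarith


lemma covDim_le_zero_of_isEmpty (X : Type) [TopologicalSpace X] [IsEmpty X] :
    covDim X ≤ 0 := by
  rw [covDim_le_iff (by simp)]
  intro ι U hUo hUc
  exact ⟨U, hUo, hUc, fun i => subset_rfl, fun x => isEmptyElim x⟩

theorem zero_dimensional_maps_dense_Gdelta (A : Type) [MetricSpace A] [CompactSpace A]
    (m : ℕ) (hA : covDim A ≤ (m : ℕ∞)) :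
    Dense {f : C(A, EuclideanSpace ℝ (Fin m)) | ∀ x, covDim (f ⁻¹' {x}) ≤ 0} ∧
    IsGδ {f : C(A, EuclideanSpace ℝ (Fin m)) | ∀ x, covDim (f ⁻¹' {x}) ≤ 0} := by
  by_cases hne : Nonempty A
  · have hT : {f : C(A, EuclideanSpace ℝ (Fin m)) | ∀ x, covDim (f ⁻¹' {x}) ≤ 0}
        = ⋂ n : ℕ, {f : C(A, EuclideanSpace ℝ (Fin m)) | Good (1 / ((n : ℝ) + 1)) f} := by
      ext f
      simp only [mem_setOf_eq, mem_iInter]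
      constructor
      · intro hf n y
        exact goodAt_of_covDim_fiber f y (hf y) (by positivity)
      · intro hf y
        exact covDim_fiber_of_good f hf y
    rw [hT]
    constructor
    · exact dense_iInter_of_isOpen (fun n => isOpen_good _)
        (fun n => dense_good hA (by positivity))
    · exact IsGδ.iInter fun n => (isOpen_good _).isGδ
  · have hT : {f : C(A, EuclideanSpace ℝ (Fin m)) | ∀ x, covDim (f ⁻¹' {x}) ≤ 0} = univ := by
      apply eq_univ_of_forall
      intro f y
      haveI : IsEmpty ↥(f ⁻¹' {y}) := by
        constructor
        rintro ⟨a, _⟩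
        exact hne ⟨a⟩
      exact covDim_le_zero_of_isEmpty _
    rw [hT]
    exact ⟨dense_univ, IsGδ.univ⟩
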